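/- Let 𝔽 be ℝ or ℂ and let Λ be an infinite index set. If V is a linear subspace of ℓ∞(Λ) such that every two elements of V form a parallel pair with respect to the supremum norm, then V has dimension at most 1. -/

import Mathlib

open scoped ENNReal

/-- Two vectors in a normed space over `𝕜` form a *parallel pair* if
`‖x + μ • y‖ = ‖x‖ + ‖y‖` for some scalar `μ` with `|μ| = 1`. -/
def ParallelPair (𝕜 : Type*) {E : Type*} [RCLike 𝕜] [NormedAddCommGroup E] [NormedSpace 𝕜 E]
    (x y : E) : Prop :=
  ∃ μ : 𝕜, ‖μ‖ = 1 ∧ ‖x + μ • y‖ = ‖x‖ + ‖y‖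

private lemma parallel_aux_real {r ε W Z A B : ℝ} (hr : 0 < r)
    (hε1 : ε ≤ r / 2) (hε2 : ε ≤ r ^ 2 / 16)
    (hA : 0 ≤ A) (hA1 : A ≤ 1) (hB : 0 ≤ B) (hB1 : B ≤ 1)
    (hW : 2 - ε < W) (hZ : r - ε < Z)
    (hpar : W * W + Z * Z = 2 * (A * A + B * B)) : False := by
  have hε0 : 0 < ε := by nlinarith
  have h2ε : 0 ≤ 2 - ε := by nlinarith
  have hrε : 0 ≤ r - ε := by linarith
  have h1 : (2 - ε) * (2 - ε) < W * W := mul_self_lt_mul_self h2ε hW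
  have h2 : (r - ε) * (r - ε) < Z * Z := mul_self_lt_mul_self hrε hZ
  have hA2 : A * A ≤ 1 := by nlinarith
  have hB2 : B * B ≤ 1 := by nlinarith
  have h3 : (r - ε) * (r - ε) < 4 * ε - ε * ε := by nlinarith
  have h4 : (r / 2) * (r / 2) ≤ (r - ε) * (r - ε) :=
    mul_self_le_mul_self (by linarith) (by linarith)
  nlinarith

set_option maxHeartbeats 2000000 in
/-- If `V` is a linear subspace of `ℓ∞(Λ)` (`Λ` an infinite index set, `𝔽 = ℝ` or `ℂ`)
in which any two elements are parallel with respect to the sup norm, then `dim V ≤ 1`. -/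
theorem linfty_inf_pairwise_parallel_subspace_dim_le_one {𝕜 : Type*} [RCLike 𝕜]
    {Λ : Type*} [Infinite Λ] (V : Submodule 𝕜 (lp (fun _ : Λ => 𝕜) ∞))
    (h : ∀ x ∈ V, ∀ y ∈ V, ParallelPair 𝕜 x y) :
    Module.rank 𝕜 V ≤ 1 := by
  have key : ∀ x ∈ V, ∀ y ∈ V, ‖x‖ = 1 → ‖y‖ = 1 → ∃ c : 𝕜, x = c • y := by
    intro x hxV y hyV hx hy
    obtain ⟨μ, hμ, hsum⟩ := h x hxV y hyV
    by_cases hz : x - μ • y = 0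
    · exact ⟨μ, sub_eq_zero.mp hz⟩
    set w : lp (fun _ : Λ => 𝕜) ∞ := x + μ • y with hw_def
    set z : lp (fun _ : Λ => 𝕜) ∞ := x - μ • y with hz_def
    exfalso
    have hμyV : μ • y ∈ V := V.smul_mem μ hyV
    have hwV : w ∈ V := V.add_mem hxV hμyV
    have hzV : z ∈ V := V.sub_mem hxV hμyV
    have hr : 0 < ‖z‖ := norm_pos_iff.mpr hz
    set r := ‖z‖ with hr_def
    have hμy : ‖μ • y‖ = 1 := by rw [norm_smul, hμ, hy, one_mul]
    have hw2 : ‖w‖ = 2 := by rw [hw_def, hsum, hx, hy]; norm_num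
    have hrle : r ≤ 2 := by
      calc r ≤ ‖x‖ + ‖μ • y‖ := norm_sub_le _ _
        _ = 2 := by rw [hx, hμy]; norm_num
    obtain ⟨σ, hσ, hzw⟩ := h z hzV w hwV
    set ε := min (r / 2) (r ^ 2 / 16) with hε_def
    have hε0 : 0 < ε := lt_min (by linarith) (by positivity)
    have hε1 : ε ≤ r / 2 := min_le_left _ _
    have hε2 : ε ≤ r ^ 2 / 16 := min_le_right _ _
    have hlt : r + 2 - ε < ‖z + σ • w‖ := by rw [hzw, hw2]; linarith
    rw [lp.norm_eq_ciSup] at hlt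
    obtain ⟨i, hi⟩ := exists_lt_of_lt_ciSup hlt
    have hcoord : (z + σ • w) i = z i + σ * w i := by
      simp [lp.coeFn_add, lp.coeFn_smul, Pi.smul_apply, smul_eq_mul]; rfl
    rw [hcoord] at hi
    have hzi : ‖z i‖ ≤ r := lp.norm_apply_le_norm ENNReal.top_ne_zero z i
    have hwi : ‖σ * w i‖ = ‖w i‖ := by rw [norm_mul, hσ, one_mul]
    have hwile : ‖w i‖ ≤ 2 := hw2 ▸ lp.norm_apply_le_norm ENNReal.top_ne_zero w i
    have htri : ‖z i + σ * w i‖ ≤ ‖z i‖ + ‖w i‖ := by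
      rw [← hwi]; exact norm_add_le _ _
    have hWbig : 2 - ε < ‖w i‖ := by linarith
    have hZbig : r - ε < ‖z i‖ := by linarith
    -- coordinates of w and z
    have hwc : w i = x i + μ * y i := by
      simp [hw_def, lp.coeFn_add, lp.coeFn_smul, Pi.smul_apply, smul_eq_mul]; rfl
    have hzc : z i = x i - μ * y i := by
      simp [hz_def, lp.coeFn_sub, lp.coeFn_smul, Pi.smul_apply, smul_eq_mul]; rfl
    have hxi : ‖x i‖ ≤ 1 := hx ▸ lp.norm_apply_le_norm ENNReal.top_ne_zero x i
    have hyi : ‖μ * y i‖ ≤ 1 := by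
      rw [norm_mul, hμ, one_mul]
      exact hy ▸ lp.norm_apply_le_norm ENNReal.top_ne_zero y i
    have hpar : ‖x i + μ * y i‖ * ‖x i + μ * y i‖ + ‖x i - μ * y i‖ * ‖x i - μ * y i‖
        = 2 * (‖x i‖ * ‖x i‖ + ‖μ * y i‖ * ‖μ * y i‖) :=
      by simpa only [sq] using parallelogram_law_with_norm 𝕜 (x i) (μ * y i)
    rw [hwc] at hWbig hwile
    rw [hzc] at hZbig
    exact parallel_aux_real hr hε1 hε2 (norm_nonneg (x i)) hxi
      (norm_nonneg (μ * y i)) hyi hWbig hZbig hpar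
  -- from key: any element is a multiple of any nonzero element
  have key2 : ∀ y ∈ V, y ≠ 0 → ∀ x ∈ V, ∃ c : 𝕜, x = c • y := by
    intro y hyV hy0 x hxV
    by_cases hx0 : x = 0
    · exact ⟨0, by simp [hx0]⟩
    have hxn : (0 : ℝ) < ‖x‖ := norm_pos_iff.mpr hx0
    have hyn : (0 : ℝ) < ‖y‖ := norm_pos_iff.mpr hy0
    set x' := ((‖x‖ : 𝕜))⁻¹ • x with hx'def
    set y' := ((‖y‖ : 𝕜))⁻¹ • y with hy'def
    have hx'V : x' ∈ V := V.smul_mem _ hxV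
    have hy'V : y' ∈ V := V.smul_mem _ hyV
    have hx'n : ‖x'‖ = 1 := by
      rw [hx'def, norm_smul, norm_inv, RCLike.norm_ofReal, abs_of_pos hxn,
        inv_mul_cancel₀ hxn.ne']
    have hy'n : ‖y'‖ = 1 := by
      rw [hy'def, norm_smul, norm_inv, RCLike.norm_ofReal, abs_of_pos hyn,
        inv_mul_cancel₀ hyn.ne']
    obtain ⟨c, hc⟩ := key x' hx'V y' hy'V hx'n hy'n
    refine ⟨(‖x‖ : 𝕜) * c * ((‖y‖ : 𝕜))⁻¹, ?_⟩
    have hxx : ((‖x‖ : 𝕜)) • x' = x := by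
      rw [hx'def, smul_smul,
        mul_inv_cancel₀ ((RCLike.ofReal_ne_zero (K := 𝕜)).mpr hxn.ne'), one_smul]
    calc x = ((‖x‖ : 𝕜)) • x' := hxx.symm
      _ = ((‖x‖ : 𝕜)) • (c • y') := by rw [hc]
      _ = ((‖x‖ : 𝕜) * c * ((‖y‖ : 𝕜))⁻¹) • y := by
          rw [hy'def, smul_smul, smul_smul, mul_assoc]
  rcases eq_or_ne V ⊥ with hV | hV
  · rw [hV]
    simp
  · obtain ⟨y, hyV, hy0⟩ := Submodule.ne_bot_iff V |>.mp hV
    have hle : V ≤ Submodule.span 𝕜 {y} := by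
      intro x hxV
      obtain ⟨c, rfl⟩ := key2 y hyV hy0 x hxV
      exact Submodule.mem_span_singleton.mpr ⟨c, rfl⟩
    calc Module.rank 𝕜 V ≤ Module.rank 𝕜 (Submodule.span 𝕜 {y}) := Submodule.rank_mono hle
      _ ≤ 1 := by simpa using rank_span_le (R := 𝕜) {y}
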